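/- Let C₂ = [[a,c],[c,b]] be a 2×2 real symmetric positive-semidefinite matrix with a ≥ b, and let M₂* be an optimal order-2 mask, i.e., linx(C₂,1;M₂*) ≤ linx(C₂,1;M) for every order-2 mask M. Set g(a,b,c) := exp(2·linx(C₂,1;M₂*)). Then linx(C₂,1) − linx(C₂,1;M₂*) ≥ (1/2)·log( ((c²+1−ab)² + (a+b)²) / (4·g(a,b,c)) ). -/

import Mathlib

open Matrix Real Set

noncomputable section

/-- The feasible polytope `P(n,s)`. -/
def PP (n s : ℕ) : Set (Fin n → ℝ) :=
  {x | (∑ i, x i) = (s : ℝ) ∧ ∀ i, 0 ≤ x i ∧ x i ≤ 1}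

/-- The linx objective `f(C,s;x)`. -/
def fLinx {n : ℕ} (C : Matrix (Fin n) (Fin n) ℝ) (x : Fin n → ℝ) : ℝ :=
  (1 / 2) * Real.log ((C * Matrix.diagonal x * C + Matrix.diagonal fun i => 1 - x i).det)

/-- The linx bound `linx(C,s)`. -/
def linx (n s : ℕ) (C : Matrix (Fin n) (Fin n) ℝ) : ℝ :=
  sSup (fLinx C '' PP n s)

/-- A mask of order `n`: a positive-semidefinite matrix with unit diagonal. -/
def IsMask {n : ℕ} (M : Matrix (Fin n) (Fin n) ℝ) : Prop :=
  M.PosSemidef ∧ ∀ i, M i i = 1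

/-- The masked linx bound `linx(C,s;M)`. -/
def linxMask (n s : ℕ) (C M : Matrix (Fin n) (Fin n) ℝ) : ℝ :=
  sSup (fLinx (Matrix.hadamard C M) '' PP n s)


lemma diag_fin_two (v : Fin 2 → ℝ) :
    (Matrix.diagonal v : Matrix (Fin 2) (Fin 2) ℝ) = !![v 0, 0; 0, v 1] := by
  ext i j; fin_cases i <;> fin_cases j <;> simp [Matrix.diagonal]

lemma log_le_of_abs_le {x B : ℝ} (hB : 1 ≤ B) (h : |x| ≤ B) :
    Real.log x ≤ Real.log B := by
  rw [← Real.log_abs]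
  rcases eq_or_lt_of_le (abs_nonneg x) with h0 | h0
  · rw [← h0]; simpa using Real.log_nonneg hB
  · exact Real.log_le_log h0 h

theorem stmt_9 (a b c : ℝ) (hab : b ≤ a)
    (hC : (!![a, c; c, b] : Matrix (Fin 2) (Fin 2) ℝ).PosSemidef)
    (Mstar : Matrix (Fin 2) (Fin 2) ℝ) (hMstar : IsMask Mstar)
    (hopt : ∀ M : Matrix (Fin 2) (Fin 2) ℝ, IsMask M →
      linxMask 2 1 !![a, c; c, b] Mstar ≤ linxMask 2 1 !![a, c; c, b] M)
    (g : ℝ) (hg : g = Real.exp (2 * linxMask 2 1 !![a, c; c, b] Mstar)) :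
    (1 / 2) * Real.log (((c ^ 2 + 1 - a * b) ^ 2 + (a + b) ^ 2) / (4 * g))
      ≤ linx 2 1 !![a, c; c, b] - linxMask 2 1 !![a, c; c, b] Mstar := by
  have ha : 0 ≤ a := by
    have := hC.dotProduct_mulVec_nonneg ![1, 0]
    simpa [dotProduct, Matrix.mulVec, Fin.sum_univ_two] using this
  have hb : 0 ≤ b := by
    have := hC.dotProduct_mulVec_nonneg ![0, 1]
    simpa [dotProduct, Matrix.mulVec, Fin.sum_univ_two] using this
  set C : Matrix (Fin 2) (Fin 2) ℝ := !![a, c; c, b] with hCdef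
  set N : ℝ := (c ^ 2 + 1 - a * b) ^ 2 + (a + b) ^ 2 with hNdef
  set B : ℝ := (a ^ 2 + c ^ 2 + 1) * (b ^ 2 + c ^ 2 + 1) + c ^ 2 * (a + b) ^ 2 with hBdef
  have hB1 : 1 ≤ B := by
    nlinarith [mul_nonneg (by positivity : (0:ℝ) ≤ a^2+c^2) (by positivity : (0:ℝ) ≤ b^2+c^2), mul_nonneg (sq_nonneg c) (sq_nonneg (a+b)), sq_nonneg a, sq_nonneg b, sq_nonneg c]
  -- generic determinant formula
  have hdet : ∀ x : Fin 2 → ℝ,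
      (C * Matrix.diagonal x * C + Matrix.diagonal fun i => 1 - x i).det
        = (a^2 * x 0 + c^2 * x 1 + 1 - x 0) * (c^2 * x 0 + b^2 * x 1 + 1 - x 1)
            - (a*c*x 0 + c*b*x 1)^2 := by
    intro x
    rw [diag_fin_two x, diag_fin_two (fun i => 1 - x i), hCdef,
      Matrix.mul_fin_two, Matrix.mul_fin_two]
    simp [Matrix.det_fin_two_of]
    ring
  -- bounded above
  have hBdd : BddAbove (fLinx C '' PP 2 1) := by
    refine ⟨(1 / 2) * Real.log B, ?_⟩
    rintro y ⟨x, hx, rfl⟩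
    obtain ⟨-, hxb⟩ := hx
    obtain ⟨h00, h01⟩ := hxb 0
    obtain ⟨h10, h11⟩ := hxb 1
    have hm00 : 0 ≤ a^2 * x 0 + c^2 * x 1 + 1 - x 0 := by nlinarith [sq_nonneg a, sq_nonneg c]
    have hm00' : a^2 * x 0 + c^2 * x 1 + 1 - x 0 ≤ a^2 + c^2 + 1 := by
      nlinarith [sq_nonneg a, sq_nonneg c]
    have hm11 : 0 ≤ c^2 * x 0 + b^2 * x 1 + 1 - x 1 := by nlinarith [sq_nonneg b, sq_nonneg c]
    have hm11' : c^2 * x 0 + b^2 * x 1 + 1 - x 1 ≤ b^2 + c^2 + 1 := by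
      nlinarith [sq_nonneg b, sq_nonneg c]
    have hs0 : 0 ≤ a * x 0 + b * x 1 := by positivity
    have hs1 : a * x 0 + b * x 1 ≤ a + b := by nlinarith
    have hm01 : (a*c*x 0 + c*b*x 1)^2 ≤ c^2 * (a + b)^2 := by
      have h1 : (a * x 0 + b * x 1)^2 ≤ (a + b)^2 := by nlinarith
      have h2 : (a*c*x 0 + c*b*x 1)^2 = c^2 * (a * x 0 + b * x 1)^2 := by ring
      rw [h2]
      exact mul_le_mul_of_nonneg_left h1 (sq_nonneg c)
    have hprod : (a^2 * x 0 + c^2 * x 1 + 1 - x 0) * (c^2 * x 0 + b^2 * x 1 + 1 - x 1)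
        ≤ (a^2 + c^2 + 1) * (b^2 + c^2 + 1) :=
      mul_le_mul hm00' hm11' hm11 (by positivity)
    have habs : |(C * Matrix.diagonal x * C + Matrix.diagonal fun i => 1 - x i).det| ≤ B := by
      rw [hdet x, abs_le]
      have hP : (0:ℝ) ≤ (a^2 + c^2 + 1) * (b^2 + c^2 + 1) := by positivity
      have hQ : (0:ℝ) ≤ c^2 * (a + b)^2 := by positivity
      constructor
      · linarith [hBdef, hm01, mul_nonneg hm00 hm11, hP]
      · linarith [hBdef, hprod, sq_nonneg (a*c*x 0 + c*b*x 1), hQ]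
    have := log_le_of_abs_le hB1 habs
    unfold fLinx
    linarith
  -- the point (1/2, 1/2)
  have hmem : (![1/2, 1/2] : Fin 2 → ℝ) ∈ PP 2 1 := by
    constructor
    · simp [Fin.sum_univ_two]; norm_num
    · intro i; fin_cases i <;> norm_num
  have hval : fLinx C ![1/2, 1/2] = (1 / 2) * Real.log (N / 4) := by
    unfold fLinx
    rw [hdet]
    congr 1
    simp [hNdef]
    ring
  have hlinx : (1 / 2) * Real.log (N / 4) ≤ linx 2 1 C := by
    rw [← hval]
    exact le_csSup hBdd ⟨_, hmem, rfl⟩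
  -- positivity of N and g
  have hg0 : 0 < g := hg ▸ Real.exp_pos _
  have hN : 0 < N := by
    by_cases h : a + b = 0
    · have ha0 : a = 0 := by linarith
      have hb0 : b = 0 := by linarith
      have hNe : N = (c^2 + 1)^2 := by rw [hNdef, ha0, hb0]; ring
      rw [hNe]; positivity
    · have h' : 0 < a + b := lt_of_le_of_ne (by linarith) (Ne.symm h)
      nlinarith [sq_nonneg (c ^ 2 + 1 - a * b)]
  have hlog : Real.log g = 2 * linxMask 2 1 C Mstar := by rw [hg, Real.log_exp]
  have hsplit : Real.log (N / (4 * g)) = Real.log (N / 4) - Real.log g := by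
    rw [show N / (4 * g) = (N / 4) / g by ring]
    exact Real.log_div (by positivity) (ne_of_gt hg0)
  rw [hsplit]
  linarith
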